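/- Let f be a continuous function on [0,1] and let p be a polynomial of degree at most n that is a best mean approximation to f among polynomials of degree at most n (i.e., ‖f−p‖₁ ≤ ‖f−q‖₁ for all q of degree ≤ n). Then f − p has at least n+1 zeros in [0,1]. -/

import Mathlib

set_option maxHeartbeats 1000000
open MeasureTheory


lemma sign_const (g : ℝ → ℝ) (s : Set ℝ) (hs : IsPreconnected s) (hc : ContinuousOn g s)
    (h0 : ∀ x ∈ s, g x ≠ 0) : (∀ x ∈ s, 0 < g x) ∨ (∀ x ∈ s, g x < 0) := by
  by_cases h : ∀ x ∈ s, 0 < g x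
  · exact Or.inl h
  · push_neg at h
    obtain ⟨y, hy, hy'⟩ := h
    have hyneg : g y < 0 := lt_of_le_of_ne hy' (h0 y hy)
    refine Or.inr fun x hx => ?_
    by_contra hxp
    push_neg at hxp
    have hxpos : 0 < g x := lt_of_le_of_ne hxp (Ne.symm (h0 x hx))
    obtain ⟨z, hz, hz'⟩ := hs.intermediate_value hy hx hc ⟨hyneg.le, hxpos.le⟩
    exact h0 z hz hz'

lemma lemA_const (g : ℝ → ℝ) (s : Set ℝ) (hs : IsPreconnected s) (hc : ContinuousOn g s)
    (h0 : ∀ x ∈ s, g x ≠ 0) :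
    ∃ q : Polynomial ℝ, q.natDegree = 0 ∧ (∀ x ∈ s, 0 < q.eval x * g x) ∧
      (∀ x : ℝ, q.eval x ≠ 0) := by
  rcases sign_const g s hs hc h0 with h | h
  · exact ⟨Polynomial.C 1, Polynomial.natDegree_C 1,
      fun x hx => by simpa using h x hx, fun x => by simp⟩
  · refine ⟨Polynomial.C (-1), Polynomial.natDegree_C _, fun x hx => ?_, fun x => by simp⟩
    have := h x hx; simp only [Polynomial.eval_C]; nlinarith

lemma lemA (g : ℝ → ℝ) (b : ℝ) :
    ∀ (m : ℕ) (a : ℝ) (Z : Finset ℝ), a ≤ b →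
    ContinuousOn g (Set.Icc a b) →
    (∀ x, x ∈ Z ↔ x ∈ Set.Icc a b ∧ g x = 0) → Z.card ≤ m →
    ∃ q : Polynomial ℝ, q.natDegree ≤ m ∧ (∀ x ∈ Set.Icc a b, 0 ≤ q.eval x * g x) ∧
      (∀ x, x ≤ b → q.eval x = 0 → x ∈ Set.Icc a b ∧ g x = 0) := by
  intro m
  induction m with
  | zero =>
    intro a Z hab hc hiff hcard
    have hZ : Z = ∅ := Finset.card_eq_zero.mp (Nat.le_zero.mp hcard)
    have h0 : ∀ x ∈ Set.Icc a b, g x ≠ 0 := by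
      intro x hx hgx
      have : x ∈ Z := (hiff x).mpr ⟨hx, hgx⟩
      simp [hZ] at this
    obtain ⟨q, hd, h2, h3⟩ := lemA_const g _ isPreconnected_Icc hc h0
    exact ⟨q, le_of_eq hd, fun x hx => (h2 x hx).le, fun x _ hx0 => absurd hx0 (h3 x)⟩
  | succ m ih =>
    intro a Z hab hc hiff hcard
    by_cases hZne : Z.Nonempty
    swap
    · rw [Finset.not_nonempty_iff_eq_empty] at hZne
      have h0 : ∀ x ∈ Set.Icc a b, g x ≠ 0 := by
        intro x hx hgx
        have : x ∈ Z := (hiff x).mpr ⟨hx, hgx⟩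
        simp [hZne] at this
      obtain ⟨q, hd, h2, h3⟩ := lemA_const g _ isPreconnected_Icc hc h0
      exact ⟨q, hd ▸ Nat.zero_le _, fun x hx => (h2 x hx).le, fun x _ hx0 => absurd hx0 (h3 x)⟩
    set z := Z.min' hZne with hzdef
    have hzZ : z ∈ Z := Z.min'_mem hZne
    obtain ⟨hzmem, hgz⟩ := (hiff z).mp hzZ
    have hzmin : ∀ y ∈ Z, z ≤ y := fun y hy => Z.min'_le y hy
    by_cases hzb : b ≤ z
    · have hzb' : z = b := le_antisymm hzmem.2 hzb
      have h0 : ∀ x ∈ Set.Ico a b, g x ≠ 0 := by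
        intro x hx hgx
        have hxZ : x ∈ Z := (hiff x).mpr ⟨⟨hx.1, hx.2.le⟩, hgx⟩
        have := hzmin x hxZ
        rw [hzb'] at this
        exact absurd hx.2 (not_lt.mpr this)
      obtain ⟨q, hd, h2, h3⟩ := lemA_const g (Set.Ico a b) isPreconnected_Ico
        (hc.mono Set.Ico_subset_Icc_self) h0
      refine ⟨q, hd ▸ Nat.zero_le _, fun x hx => ?_, fun x _ hx0 => absurd hx0 (h3 x)⟩
      rcases eq_or_lt_of_le hx.2 with heq | hlt
      · have hgx : g x = 0 := by rw [heq, ← hzb']; exact hgz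
        simp [hgx]
      · exact (h2 x ⟨hx.1, hlt⟩).le
    · push_neg at hzb
      obtain ⟨z', hz1, hz2, hno, hZ'⟩ :
          ∃ z', z < z' ∧ z' ≤ b ∧ (∀ x, z < x → x ≤ z' → g x ≠ 0) ∧
            (∀ x, x ∈ Z.erase z ↔ x ∈ Set.Icc z' b ∧ g x = 0) := by
        by_cases hZe : (Z.erase z).Nonempty
        · set z₂ := (Z.erase z).min' hZe with hz₂def
          have hz₂Z : z₂ ∈ Z.erase z := Finset.min'_mem _ _
          have hz₂Z' : z₂ ∈ Z := Finset.mem_of_mem_erase hz₂Z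
          have hz₂ne : z₂ ≠ z := Finset.ne_of_mem_erase hz₂Z
          have hzz₂ : z < z₂ := lt_of_le_of_ne (hzmin _ hz₂Z') (Ne.symm hz₂ne)
          have hz₂b : z₂ ≤ b := ((hiff z₂).mp hz₂Z').1.2
          refine ⟨(z + z₂)/2, by linarith, by linarith, ?_, ?_⟩
          · intro x hx1 hx2 hgx
            have hxZ : x ∈ Z := (hiff x).mpr ⟨⟨by linarith [hzmem.1], by linarith⟩, hgx⟩
            have hxe : x ∈ Z.erase z := Finset.mem_erase.mpr ⟨ne_of_gt hx1, hxZ⟩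
            have := Finset.min'_le _ x hxe
            rw [← hz₂def] at this
            linarith
          · intro x
            constructor
            · intro hx
              obtain ⟨hxm, hgx⟩ := (hiff x).mp (Finset.mem_of_mem_erase hx)
              have := Finset.min'_le _ x hx
              rw [← hz₂def] at this
              exact ⟨⟨by linarith, hxm.2⟩, hgx⟩
            · rintro ⟨hxm, hgx⟩
              have hxZ : x ∈ Z := (hiff x).mpr ⟨⟨by linarith [hzmem.1, hxm.1], hxm.2⟩, hgx⟩
              exact Finset.mem_erase.mpr ⟨by intro h; rw [h] at hxm; linarith [hxm.1], hxZ⟩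
        · have hZz : ∀ x ∈ Z, x = z := by
            intro x hx
            by_contra hne
            exact hZe ⟨x, Finset.mem_erase.mpr ⟨hne, hx⟩⟩
          refine ⟨b, hzb, le_refl b, ?_, ?_⟩
          · intro x hx1 hx2 hgx
            have hxZ : x ∈ Z := (hiff x).mpr ⟨⟨by linarith [hzmem.1], hx2⟩, hgx⟩
            exact absurd (hZz x hxZ) (ne_of_gt hx1)
          · intro x
            constructor
            · rintro hx
              exact absurd (hZz x (Finset.mem_of_mem_erase hx)) (Finset.ne_of_mem_erase hx)
            · rintro ⟨hxm, hgx⟩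
              have hxZ : x ∈ Z := (hiff x).mpr ⟨⟨by linarith [hzmem.1, hzb, hxm.1], hxm.2⟩, hgx⟩
              have := hZz x hxZ
              exfalso
              have := hxm.1
              linarith
      have hz'a : a ≤ z' := le_trans hzmem.1 hz1.le
      obtain ⟨q₁, hd1, h21, h31⟩ := ih z' (Z.erase z) hz2
        (hc.mono (Set.Icc_subset_Icc hz'a le_rfl)) hZ'
        (by rw [Finset.card_erase_of_mem hzZ]; omega)
      have hgz' : g z' ≠ 0 := hno z' hz1 le_rfl
      have hq1z' : q₁.eval z' ≠ 0 := fun h => hgz' ((h31 z' hz2 h).2)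
      have hq1nv : ∀ x ∈ Set.Iic z', q₁.eval x ≠ 0 := by
        intro x hx h0
        rcases eq_or_lt_of_le (Set.mem_Iic.mp hx) with heq | hlt
        · exact hq1z' (heq ▸ h0)
        · exact absurd (h31 x (le_trans hlt.le hz2) h0).1.1 (not_le.mpr hlt)
      have Sq := sign_const (fun x => q₁.eval x) (Set.Iic z') isPreconnected_Iic
        (Polynomial.continuous_aeval q₁).continuousOn hq1nv
      have Sg' := sign_const g (Set.Ioc z z') isPreconnected_Ioc
        (hc.mono (fun x hx => ⟨le_trans hzmem.1 hx.1.le, le_trans hx.2 hz2⟩))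
        (fun x hx => hno x hx.1 hx.2)
      have hrel : 0 < q₁.eval z' * g z' :=
        lt_of_le_of_ne (h21 z' ⟨le_rfl, hz2⟩) (Ne.symm (mul_ne_zero hq1z' hgz'))
      have hcomb : ((∀ x ∈ Set.Iic z', 0 < q₁.eval x) ∧ (∀ x ∈ Set.Ioc z z', 0 < g x)) ∨
          ((∀ x ∈ Set.Iic z', q₁.eval x < 0) ∧ (∀ x ∈ Set.Ioc z z', g x < 0)) := by
        rcases Sq with hq | hq <;> rcases Sg' with hg' | hg'
        · exact Or.inl ⟨hq, hg'⟩
        · exfalso; have h1 := hq z' Set.self_mem_Iic; have h2 := hg' z' ⟨hz1, le_rfl⟩; nlinarith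
        · exfalso; have h1 := hq z' Set.self_mem_Iic; have h2 := hg' z' ⟨hz1, le_rfl⟩; nlinarith
        · exact Or.inr ⟨hq, hg'⟩
      have hgnv : ∀ x ∈ Set.Ico a z, g x ≠ 0 := by
        intro x hx hgx
        have hxZ : x ∈ Z := (hiff x).mpr ⟨⟨hx.1, le_trans hx.2.le (le_trans hz1.le hz2)⟩, hgx⟩
        exact absurd (hzmin x hxZ) (not_le.mpr hx.2)
      have Sg := sign_const g (Set.Ico a z) isPreconnected_Ico
        (hc.mono (fun x hx => ⟨hx.1, le_trans hx.2.le (le_trans hz1.le hz2)⟩)) hgnv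
      have hq₁ne : q₁ ≠ 0 := fun h => hq1z' (by rw [h]; simp)
      -- decide match or mismatch
      have hmain : (∀ x ∈ Set.Ico a z, 0 < q₁.eval x * g x) ∨
          (∀ x ∈ Set.Ico a z, 0 < (x - z) * q₁.eval x * g x) := by
        rcases hcomb with ⟨hqp, _⟩ | ⟨hqn, _⟩ <;> rcases Sg with hgl | hgl
        · exact Or.inl (fun x hx => mul_pos (hqp x (by simp only [Set.mem_Iic]; linarith [hx.2, hz1])) (hgl x hx))
        · refine Or.inr (fun x hx => ?_)
          have h1 := hqp x (by simp only [Set.mem_Iic]; linarith [hx.2, hz1])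
          have h2 := hgl x hx
          have h3 : x - z < 0 := by linarith [hx.2]
          exact mul_pos_of_neg_of_neg (mul_neg_of_neg_of_pos h3 h1) h2
        · refine Or.inr (fun x hx => ?_)
          have h1 := hqn x (by simp only [Set.mem_Iic]; linarith [hx.2, hz1])
          have h2 := hgl x hx
          have h3 : x - z < 0 := by linarith [hx.2]
          exact mul_pos (mul_pos_of_neg_of_neg h3 h1) h2
        · exact Or.inl (fun x hx => mul_pos_of_neg_of_neg (hqn x (by simp only [Set.mem_Iic]; linarith [hx.2, hz1])) (hgl x hx))
      have hmid : ∀ x, z < x → x < z' → 0 < q₁.eval x * g x := by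
        intro x hx1 hx2
        rcases hcomb with ⟨hqp, hgp⟩ | ⟨hqn, hgn⟩
        · exact mul_pos (hqp x (le_of_lt hx2)) (hgp x ⟨hx1, hx2.le⟩)
        · exact mul_pos_of_neg_of_neg (hqn x (le_of_lt hx2)) (hgn x ⟨hx1, hx2.le⟩)
      rcases hmain with hM | hM
      · refine ⟨q₁, le_trans hd1 (Nat.le_succ m), ?_, ?_⟩
        · intro x hx
          rcases le_or_gt z' x with h | h
          · exact h21 x ⟨h, hx.2⟩
          rcases lt_trichotomy x z with h2 | h2 | h2
          · exact (hM x ⟨hx.1, h2⟩).le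
          · rw [h2, hgz, mul_zero]
          · exact (hmid x h2 h).le
        · intro x hxb h0
          obtain ⟨hm, hg0⟩ := h31 x hxb h0
          exact ⟨⟨le_trans hz'a hm.1, hm.2⟩, hg0⟩
      · refine ⟨(Polynomial.X - Polynomial.C z) * q₁, ?_, ?_, ?_⟩
        · rw [Polynomial.natDegree_mul (Polynomial.X_sub_C_ne_zero z) hq₁ne,
            Polynomial.natDegree_X_sub_C]
          omega
        · intro x hx
          simp only [Polynomial.eval_mul, Polynomial.eval_sub, Polynomial.eval_X,
            Polynomial.eval_C]
          rcases le_or_gt z' x with h | h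
          · have h1 := h21 x ⟨h, hx.2⟩
            have h2 : 0 ≤ x - z := by linarith [hz1]
            nlinarith
          rcases lt_trichotomy x z with h2 | h2 | h2
          · exact (hM x ⟨hx.1, h2⟩).le
          · rw [h2]; simp [hgz]
          · have h1 := hmid x h2 h
            have h3 : 0 < x - z := by linarith
            nlinarith
        · intro x hxb h0
          simp only [Polynomial.eval_mul, Polynomial.eval_sub, Polynomial.eval_X,
            Polynomial.eval_C] at h0
          rcases mul_eq_zero.mp h0 with h | h
          · have : x = z := by linarith [sub_eq_zero.mp h]
            rw [this]; exact ⟨hzmem, hgz⟩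
          · obtain ⟨hm, hg0⟩ := h31 x hxb h
            exact ⟨⟨le_trans hz'a hm.1, hm.2⟩, hg0⟩


lemma abs_sub_sign (a b : ℝ) (h : 0 ≤ a * b) (h2 : |a| ≤ |b|) : |b - a| = |b| - |a| := by
  rcases abs_cases a with ⟨ha, ha'⟩ | ⟨ha, ha'⟩ <;> rcases abs_cases b with ⟨hb, hb'⟩ | ⟨hb, hb'⟩ <;>
    rcases abs_cases (b - a) with ⟨hc, hc'⟩ | ⟨hc, hc'⟩ <;> nlinarith

lemma key (g : ℝ → ℝ) (q : Polynomial ℝ) (Z : Finset ℝ)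
    (hg : ContinuousOn g (Set.Icc 0 1))
    (hZ : ∀ x ∈ Set.Icc (0:ℝ) 1, g x = 0 → x ∈ Z)
    (h2 : ∀ x ∈ Set.Icc (0:ℝ) 1, 0 ≤ q.eval x * g x)
    (h3 : ∀ x ∈ Set.Icc (0:ℝ) 1, q.eval x = 0 → g x = 0)
    (hx₁ : ∃ x ∈ Set.Icc (0:ℝ) 1, g x ≠ 0) :
    ∃ ε : ℝ, 0 < ε ∧ (∫ x in (0:ℝ)..1, |g x - ε * q.eval x|) < ∫ x in (0:ℝ)..1, |g x| := by
  classical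
  obtain ⟨x₁, hx₁m, hx₁g⟩ := hx₁
  have hqx₁ : q.eval x₁ ≠ 0 := fun h => hx₁g (h3 x₁ hx₁m h)
  have hqne : q ≠ 0 := fun h => hqx₁ (by rw [h]; simp)
  have hqcont : Continuous fun x : ℝ => |q.eval x| := (Polynomial.continuous q).abs
  -- max of |q| on [0,1]
  obtain ⟨x₀, hx₀m, hx₀max⟩ := isCompact_Icc.exists_isMaxOn (α := ℝ)
    (s := Set.Icc (0:ℝ) 1) ⟨0, by norm_num⟩ hqcont.continuousOn
  set M := |q.eval x₀| with hMdef
  have hM : ∀ x ∈ Set.Icc (0:ℝ) 1, |q.eval x| ≤ M := fun x hx => hx₀max hx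
  have hMpos : 0 < M := lt_of_lt_of_le (abs_pos.mpr hqx₁) (hM x₁ hx₁m)
  -- I = ∫ |q| > 0
  set s : Set ℝ := Set.Ioc 0 1 with hsdef
  have hsm : MeasurableSet s := measurableSet_Ioc
  have hqi : IntegrableOn (fun x => |q.eval x|) s := (hqcont.integrableOn_Icc (a := (0:ℝ))
    (b := 1)).mono_set Set.Ioc_subset_Icc_self
  set I := ∫ x in s, |q.eval x| with hIdef
  have hIpos : 0 < I := by
    rw [hIdef, MeasureTheory.setIntegral_pos_iff_support_of_nonneg_ae
      (Filter.Eventually.of_forall fun x => abs_nonneg _) hqi]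
    have hroots : (Set.Ioc (0:ℝ) 1 \ Function.support fun x => |q.eval x|).Finite := by
      apply Set.Finite.subset (Polynomial.finite_setOf_isRoot hqne)
      intro x hx
      have := hx.2
      simp only [Function.mem_support, ne_eq, not_not, abs_eq_zero] at this
      exact this
    have h0 : volume (Set.Ioc (0:ℝ) 1 \ Function.support fun x => |q.eval x|) = 0 :=
      hroots.measure_zero _
    have hle : volume (Set.Ioc (0:ℝ) 1) ≤
        volume ((Function.support fun x => |q.eval x|) ∩ Set.Ioc 0 1) := by
      calc volume (Set.Ioc (0:ℝ) 1)
          ≤ volume (((Function.support fun x => |q.eval x|) ∩ Set.Ioc 0 1) ∪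
            (Set.Ioc (0:ℝ) 1 \ Function.support fun x => |q.eval x|)) := by
            apply measure_mono
            intro x hx
            by_cases h : x ∈ Function.support fun x => |q.eval x|
            · exact Or.inl ⟨h, hx⟩
            · exact Or.inr ⟨hx, h⟩
        _ ≤ _ + _ := measure_union_le _ _
        _ = volume ((Function.support fun x => |q.eval x|) ∩ Set.Ioc 0 1) := by rw [h0, add_zero]
    have : (0:ENNReal) < volume (Set.Ioc (0:ℝ) 1) := by simp [Real.volume_Ioc]
    exact lt_of_lt_of_le this hle
  -- choose δ
  set N : ℝ := (Z.card : ℝ) with hNdef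
  have hNnn : 0 ≤ N := Nat.cast_nonneg _
  set δ : ℝ := min (I / (4 * M * (N + 1))) (1 / (4 * (N + 1))) with hδdef
  have hδpos : 0 < δ := by
    apply lt_min
    · positivity
    · positivity
  have hδ1 : δ ≤ I / (4 * M * (N + 1)) := min_le_left _ _
  have hδ2 : δ ≤ 1 / (4 * (N + 1)) := min_le_right _ _
  -- bad set
  set bad : Set ℝ := ⋃ z ∈ Z, Set.Ioo (z - δ) (z + δ) with hbaddef
  have hbadopen : IsOpen bad := isOpen_biUnion fun z _ => isOpen_Ioo
  have hbadmeas : volume bad ≤ ENNReal.ofReal (N * (2 * δ)) := by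
    calc volume bad ≤ ∑ z ∈ Z, volume (Set.Ioo (z - δ) (z + δ)) := measure_biUnion_finset_le _ _
      _ = ∑ z ∈ Z, ENNReal.ofReal (2 * δ) := by
          apply Finset.sum_congr rfl
          intro z _
          rw [Real.volume_Ioo]
          congr 1
          ring
      _ = Z.card • ENNReal.ofReal (2 * δ) := by rw [Finset.sum_const]
      _ = ENNReal.ofReal (N * (2 * δ)) := by
          rw [nsmul_eq_mul, ← ENNReal.ofReal_natCast, ← ENNReal.ofReal_mul (Nat.cast_nonneg _)]
  set K : Set ℝ := Set.Icc 0 1 \ bad with hKdef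
  have hKcomp : IsCompact K := isCompact_Icc.diff hbadopen
  have hKmeas : MeasurableSet K := measurableSet_Icc.diff hbadopen.measurableSet
  have hKne : K.Nonempty := by
    by_contra h
    rw [Set.not_nonempty_iff_eq_empty] at h
    have hsub : Set.Icc (0:ℝ) 1 ⊆ bad := by
      intro x hx
      by_contra hxb
      exact (Set.eq_empty_iff_forall_notMem.mp h x) ⟨hx, hxb⟩
    have h1 : volume (Set.Icc (0:ℝ) 1) ≤ ENNReal.ofReal (N * (2 * δ)) :=
      le_trans (measure_mono hsub) hbadmeas
    rw [Real.volume_Icc, show (1:ℝ) - 0 = 1 by norm_num] at h1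
    have h2' : (1:ℝ) ≤ N * (2 * δ) :=
      (ENNReal.ofReal_le_ofReal_iff (mul_nonneg hNnn (by linarith [hδpos]))).mp h1
    have h4pos : (0:ℝ) < 4 * (N + 1) := by linarith
    have hδ2' : δ * (4 * (N + 1)) ≤ 1 := (le_div_iff₀ h4pos).mp hδ2
    nlinarith [hδpos]
  -- min of |g| on K
  have hKsub : K ⊆ Set.Icc 0 1 := Set.diff_subset
  obtain ⟨x₂, hx₂m, hx₂min⟩ := hKcomp.exists_isMinOn hKne ((hg.mono hKsub).abs)
  set c := |g x₂| with hcdef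
  have hc : ∀ x ∈ K, c ≤ |g x| := fun x hx => hx₂min hx
  have hgx₂ : g x₂ ≠ 0 := by
    intro h
    have hx₂Z : x₂ ∈ Z := hZ x₂ (hKsub hx₂m) h
    exact hx₂m.2 (Set.mem_biUnion hx₂Z ⟨by linarith [hδpos], by linarith [hδpos]⟩)
  have hcpos : 0 < c := abs_pos.mpr hgx₂
  set ε := c / M with hεdef
  have hεpos : 0 < ε := div_pos hcpos hMpos
  refine ⟨ε, hεpos, ?_⟩
  -- pointwise identities
  have hptK : ∀ x ∈ K, |g x - ε * q.eval x| = |g x| - ε * |q.eval x| := by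
    intro x hx
    have h1 : 0 ≤ (ε * q.eval x) * g x := by
      have := h2 x (hKsub hx)
      nlinarith
    have h2' : |ε * q.eval x| ≤ |g x| := by
      rw [abs_mul, abs_of_pos hεpos]
      calc ε * |q.eval x| ≤ ε * M := by nlinarith [hM x (hKsub hx), hεpos.le]
        _ = c := by rw [hεdef]; exact div_mul_cancel₀ c hMpos.ne'
        _ ≤ |g x| := hc x hx
    rw [abs_sub_sign _ _ h1 h2', abs_mul, abs_of_pos hεpos]
  have hptB : ∀ x ∈ Set.Icc (0:ℝ) 1, |g x - ε * q.eval x| ≤ |g x| + ε * M := by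
    intro x hx
    calc |g x - ε * q.eval x| ≤ |g x| + |ε * q.eval x| := abs_sub _ _
      _ ≤ |g x| + ε * M := by
          rw [abs_mul, abs_of_pos hεpos]
          nlinarith [hM x hx, hεpos.le]
  -- integrability
  have hgcont : ContinuousOn (fun x => |g x|) (Set.Icc 0 1) := hg.abs
  have hgi : IntegrableOn (fun x => |g x|) s :=
    (hgcont.integrableOn_Icc).mono_set Set.Ioc_subset_Icc_self
  have hfcont : ContinuousOn (fun x => |g x - ε * q.eval x|) (Set.Icc 0 1) :=
    (hg.sub ((continuous_const.mul (Polynomial.continuous q)).continuousOn)).abs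
  have hfi : IntegrableOn (fun x => |g x - ε * q.eval x|) s :=
    (hfcont.integrableOn_Icc).mono_set Set.Ioc_subset_Icc_self
  -- split integrals
  set A := s ∩ K with hAdef
  set B := s \ K with hBdef
  have hAmeas : MeasurableSet A := hsm.inter hKmeas
  have hBmeas : MeasurableSet B := hsm.diff hKmeas
  have hBsub : B ⊆ Set.Icc 0 1 := fun x hx => Set.Ioc_subset_Icc_self hx.1
  have hBbad : B ⊆ bad := by
    intro x hx
    have hxI : x ∈ Set.Icc (0:ℝ) 1 := Set.Ioc_subset_Icc_self hx.1
    by_contra h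
    exact hx.2 ⟨hxI, h⟩
  have hBfin : volume B < ⊤ :=
    lt_of_le_of_lt (measure_mono hBsub) (by rw [Real.volume_Icc]; simp)
  set ν := (volume B).toReal with hνdef
  have hνnn : 0 ≤ ν := ENNReal.toReal_nonneg
  have hνle : ν ≤ N * (2 * δ) := by
    rw [hνdef]
    have h1 : volume B ≤ ENNReal.ofReal (N * (2 * δ)) := le_trans (measure_mono hBbad) hbadmeas
    calc (volume B).toReal ≤ (ENNReal.ofReal (N * (2 * δ))).toReal :=
          ENNReal.toReal_mono ENNReal.ofReal_ne_top h1
      _ = N * (2 * δ) := ENNReal.toReal_ofReal (mul_nonneg hNnn (by linarith [hδpos]))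
  -- the splits
  have hsplit1 : (∫ x in A, |g x - ε * q.eval x|) + (∫ x in B, |g x - ε * q.eval x|)
      = ∫ x in s, |g x - ε * q.eval x| := MeasureTheory.integral_inter_add_diff hKmeas hfi
  have hsplit2 : (∫ x in A, |g x|) + (∫ x in B, |g x|) = ∫ x in s, |g x| :=
    MeasureTheory.integral_inter_add_diff hKmeas hgi
  have hsplit3 : (∫ x in A, |q.eval x|) + (∫ x in B, |q.eval x|) = I :=
    MeasureTheory.integral_inter_add_diff hKmeas hqi
  -- bound on A
  have hIA : (∫ x in A, |g x - ε * q.eval x|) = (∫ x in A, |g x|) - ε * ∫ x in A, |q.eval x| := by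
    rw [← MeasureTheory.integral_const_mul, ← MeasureTheory.integral_sub (hgi.mono_set Set.inter_subset_left)
      ((hqi.mono_set Set.inter_subset_left).const_mul ε)]
    apply MeasureTheory.setIntegral_congr_fun hAmeas
    intro x hx
    exact hptK x hx.2
  -- bound on B
  have hIB : (∫ x in B, |g x - ε * q.eval x|) ≤ (∫ x in B, |g x|) + ε * M * ν := by
    have hconst : IntegrableOn (fun _ : ℝ => ε * M) B := integrableOn_const hBfin.ne
    calc (∫ x in B, |g x - ε * q.eval x|) ≤ ∫ x in B, (|g x| + ε * M) := by
          apply MeasureTheory.setIntegral_mono_on (hfi.mono_set Set.diff_subset)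
            ((hgi.mono_set Set.diff_subset).add hconst) hBmeas
          intro x hx
          exact hptB x (hBsub hx)
      _ = (∫ x in B, |g x|) + ε * M * ν := by
          rw [MeasureTheory.integral_add (hgi.mono_set Set.diff_subset) hconst,
            MeasureTheory.setIntegral_const, smul_eq_mul, measureReal_def]
          ring
  -- bound on ∫_A |q|
  have hqB : (∫ x in B, |q.eval x|) ≤ M * ν := by
    have hconst : IntegrableOn (fun _ : ℝ => M) B := integrableOn_const hBfin.ne
    calc (∫ x in B, |q.eval x|) ≤ ∫ x in B, M := by
          apply MeasureTheory.setIntegral_mono_on (hqi.mono_set Set.diff_subset) hconst hBmeas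
          intro x hx
          exact hM x (hBsub hx)
      _ = M * ν := by rw [MeasureTheory.setIntegral_const, smul_eq_mul, measureReal_def]; ring
  have hqA : I - M * ν ≤ ∫ x in A, |q.eval x| := by linarith [hsplit3, hqB]
  -- final computation
  have hkey : (∫ x in s, |g x - ε * q.eval x|) ≤ (∫ x in s, |g x|) - ε * (I - 2 * M * ν) := by
    have h1 : (∫ x in s, |g x - ε * q.eval x|)
        = (∫ x in A, |g x - ε * q.eval x|) + (∫ x in B, |g x - ε * q.eval x|) := hsplit1.symm
    have hεI : ε * (I - M * ν) ≤ ε * ∫ x in A, |q.eval x| :=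
      mul_le_mul_of_nonneg_left hqA hεpos.le
    nlinarith [hIA, hIB, hsplit2, hεpos.le, mul_le_mul_of_nonneg_left hνle (mul_nonneg hεpos.le hMpos.le)]
  have hgap : 0 < I - 2 * M * ν := by
    have h1 : 4 * M * (N + 1) * δ ≤ I := by
      have hMN1 : (0:ℝ) < 4 * M * (N + 1) := by nlinarith [mul_pos hMpos (show (0:ℝ) < N + 1 by linarith)]
      rw [le_div_iff₀ hMN1] at hδ1
      calc 4 * M * (N + 1) * δ = δ * (4 * M * (N + 1)) := by ring
        _ ≤ I := hδ1
    nlinarith [mul_le_mul_of_nonneg_left hνle hMpos.le, mul_pos hMpos hδpos]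
  have hlt : (∫ x in s, |g x - ε * q.eval x|) < ∫ x in s, |g x| := by nlinarith [mul_pos hεpos hgap, hkey]
  rw [intervalIntegral.integral_of_le (by norm_num : (0:ℝ) ≤ 1),
    intervalIntegral.integral_of_le (by norm_num : (0:ℝ) ≤ 1)]
  exact hlt

theorem stmt_1 (f : ℝ → ℝ) (n : ℕ)
    (hf : ContinuousOn f (Set.Icc 0 1))
    (p : Polynomial ℝ) (hp : p.natDegree ≤ n)
    (hbest : ∀ q : Polynomial ℝ, q.natDegree ≤ n →
      (∫ x in (0:ℝ)..1, |f x - p.eval x|) ≤ ∫ x in (0:ℝ)..1, |f x - q.eval x|) :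
    ∃ S : Finset ℝ, S.card = n + 1 ∧ ∀ x ∈ S, x ∈ Set.Icc (0:ℝ) 1 ∧ f x - p.eval x = 0 := by
  classical
  by_contra hcon
  push_neg at hcon
  set g : ℝ → ℝ := fun x => f x - p.eval x with hgdef
  have hg : ContinuousOn g (Set.Icc 0 1) := hf.sub (Polynomial.continuous p).continuousOn
  set Z₀ : Set ℝ := {x ∈ Set.Icc (0:ℝ) 1 | g x = 0} with hZ₀def
  have hnosub : ∀ S : Finset ℝ, ↑S ⊆ Z₀ → S.card ≠ n + 1 := by
    intro S hS hcard
    obtain ⟨x, hxS, hx⟩ := hcon S hcard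
    obtain ⟨hxm, hxg⟩ := Set.mem_sep_iff.mp (hS hxS)
    exact hx hxm hxg
  have hfin : Z₀.Finite := by
    by_contra hinf
    obtain ⟨S, hS, hcard⟩ := Set.Infinite.exists_subset_card_eq hinf (n + 1)
    exact hnosub S hS hcard
  set ZF : Finset ℝ := hfin.toFinset with hZFdef
  have hZFsub : ↑ZF ⊆ Z₀ := by rw [hZFdef]; exact fun x hx => (Set.Finite.mem_toFinset hfin).mp hx
  have hZFcard : ZF.card ≤ n := by
    by_contra hlt
    push_neg at hlt
    obtain ⟨S, hS, hcard⟩ := ZF.exists_subset_card_eq (n := n + 1) hlt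
    exact hnosub S (Set.Subset.trans (Finset.coe_subset.mpr hS) hZFsub) hcard
  have hiff : ∀ x, x ∈ ZF ↔ x ∈ Set.Icc (0:ℝ) 1 ∧ g x = 0 := by
    intro x
    rw [hZFdef, Set.Finite.mem_toFinset, hZ₀def]
    exact Set.mem_sep_iff
  obtain ⟨q, hdq, h2q, h3q⟩ := lemA g 1 n 0 ZF (by norm_num) hg hiff hZFcard
  have hx₁ : ∃ x ∈ Set.Icc (0:ℝ) 1, g x ≠ 0 := by
    by_contra h
    push_neg at h
    have hsub : Set.Icc (0:ℝ) 1 ⊆ Z₀ := fun x hx => ⟨hx, h x hx⟩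
    exact ((Set.Icc_infinite (by norm_num : (0:ℝ) < 1)).mono hsub) hfin
  obtain ⟨ε, hε, hlt⟩ := key g q ZF hg (fun x hx h0 => (hiff x).mpr ⟨hx, h0⟩) h2q
    (fun x hx h0 => (h3q x hx.2 h0).2) hx₁
  have hdq' : (p + Polynomial.C ε * q).natDegree ≤ n :=
    le_trans (Polynomial.natDegree_add_le p _)
      (max_le hp (le_trans (Polynomial.natDegree_C_mul_le ε q) hdq))
  have hb := hbest (p + Polynomial.C ε * q) hdq'
  have hcongr : (∫ x in (0:ℝ)..1, |f x - (p + Polynomial.C ε * q).eval x|)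
      = ∫ x in (0:ℝ)..1, |g x - ε * q.eval x| := by
    apply intervalIntegral.integral_congr
    intro x _
    simp only [Polynomial.eval_add, Polynomial.eval_mul, Polynomial.eval_C, hgdef]
    congr 1
    ring
  rw [hcongr] at hb
  have : (∫ x in (0:ℝ)..1, |f x - p.eval x|) = ∫ x in (0:ℝ)..1, |g x| := by
    apply intervalIntegral.integral_congr
    intro x _
    rw [hgdef]
  rw [this] at hb
  linarith
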